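/- arXiv:1306.4030 — 2 statements merged into one kernel-verified Lean document; each statement's English description precedes it below -/
import Mathlib

section
/- Let X be a smooth projective curve of genus 2 over a field K of characteristic ≠ 2 with hyperelliptic involution ι and a fixed Weierstrass point o. Let p = [(p₁)+(p₂)−2(o)] be a non-zero point of J = Pic⁰(X) given by a reduced divisor, and suppose neither p₁ nor p₂ is a Weierstrass point (i.e., ι(pᵢ) ≠ pᵢ). Then Θ ∩ Θ_p ∩ Θ_{2p} = ∅, where Θ = {[(q)−(o)] : q ∈ X} ∪ {0} is the theta divisor and Θ_q its translate by q. -/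
/-- Lemma 7.1 (ii), for the Jacobian of a genus 2 curve, axiomatized via:
`X` the set of curve points, `ι` the hyperelliptic involution, `o` the marked
Weierstrass point, `J` the Jacobian, `AJ : X → J` the Abel–Jacobi map
`q ↦ [(q)-(o)]`, `Θ = AJ(X)` the theta divisor, with the relation
`[(q)+(ι q)-2(o)] = 0`, injectivity of `AJ`, the Riemann–Roch uniqueness of
reduced representatives of nonzero degree-zero classes `[(r)-(q)]`, and
surjectivity of `X⁽²⁾ → J`. If `p = [(p₁)+(p₂)-2(o)]` is non-zero, given by a
reduced divisor, and neither `p₁` nor `p₂` is a Weierstrass point, then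
`Θ ∩ Θ_p ∩ Θ_{2p} = ∅`, where `Θ_s = Θ + s`. -/
theorem stmt_11 {X J : Type*} [AddCommGroup J]
    (ι : X → X) (o : X) (AJ : X → J) (Θ : Set J)
    (hinv : ∀ q, ι (ι q) = q) (hιo : ι o = o)
    (hAJo : AJ o = 0) (hAJι : ∀ q, AJ q + AJ (ι q) = 0)
    (hinj : Function.Injective AJ)
    (hrr : ∀ r q r' q' : X, AJ r - AJ q = AJ r' - AJ q' → AJ r ≠ AJ q →
      (r = r' ∧ q = q') ∨ (r = ι q' ∧ q = ι r'))
    (hsurj : ∀ s : J, ∃ a b : X, s = AJ a + AJ b)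
    (hΘ : Θ = Set.range AJ)
    (p₁ p₂ : X) (p : J) (hp : p = AJ p₁ + AJ p₂) (hp0 : p ≠ 0)
    (hred : p₁ ≠ ι p₂)
    (hW1 : ι p₁ ≠ p₁) (hW2 : ι p₂ ≠ p₂) :
    Θ ∩ ((fun x => x + p) '' Θ) ∩ ((fun x => x + 2 • p) '' Θ) = ∅ := by
  have hι : ∀ q : X, AJ (ι q) = -AJ q := fun q =>
    eq_neg_of_add_eq_zero_left (by rw [add_comm]; exact hAJι q)
  ext x
  simp only [Set.mem_inter_iff, Set.mem_image, Set.mem_empty_iff_false, iff_false, hΘ,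
    Set.mem_range]
  rintro ⟨⟨⟨a, rfl⟩, ⟨_, ⟨b, rfl⟩, hb⟩⟩, ⟨_, ⟨c, rfl⟩, hc⟩⟩
  -- From membership: AJ a - AJ b = p and AJ b - AJ c = p
  have e1 : AJ a - AJ b = AJ p₁ - AJ (ι p₂) := by
    rw [hι, ← hb, hp]; abel
  have e2 : AJ b - AJ c = AJ p₁ - AJ (ι p₂) := by
    have : AJ b + p = AJ c + 2 • p := by rw [hb, ← hc]
    rw [hι]
    rw [two_smul, ← add_assoc] at this
    have h' : AJ b = AJ c + p := add_right_cancel this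
    rw [h', hp]; abel
  have hpne : AJ p₁ - AJ (ι p₂) ≠ 0 := by
    rw [hι]
    intro h
    apply hp0
    rw [hp, ← sub_neg_eq_add]
    exact h
  have hab : AJ a ≠ AJ b := fun h => hpne (by rw [← e1, h, sub_self])
  have hbc : AJ b ≠ AJ c := fun h => hpne (by rw [← e2, h, sub_self])
  rcases hrr a b p₁ (ι p₂) e1 hab with ⟨_, hb1⟩ | ⟨_, hb2⟩
  · -- b = ι p₂
    rcases hrr b c p₁ (ι p₂) e2 hbc with ⟨hb1', _⟩ | ⟨hb2', _⟩
    · exact hred (hb1 ▸ hb1'.symm)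
    · rw [hinv] at hb2'
      exact hW2 (hb1.symm.trans hb2')
  · -- b = ι p₁
    rcases hrr b c p₁ (ι p₂) e2 hbc with ⟨hb1', _⟩ | ⟨hb2', _⟩
    · exact hW1 (hb2 ▸ hb1')
    · rw [hinv] at hb2'
      rw [hb2] at hb2'
      exact hred (by rw [← hb2', hinv])
end

section
/- Let X be a smooth projective curve of genus 2 over a field K of characteristic ≠ 2 with a fixed Weierstrass point o, J = Pic⁰(X), and Θ the theta divisor with respect to o. For every point p ∈ J with p ∉ J[2], the intersection Θ ∩ Θ_p ∩ Θ_{2p} ∩ Θ_{3p} is empty. -/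
/-- Lemma 7.1 (iii), for the Jacobian of a genus 2 curve, axiomatized via:
`X` the set of curve points, `ι` the hyperelliptic involution, `o` the marked
Weierstrass point, `J` the Jacobian, `AJ : X → J` the Abel–Jacobi map
`q ↦ [(q)-(o)]`, `Θ = AJ(X)` the theta divisor, with the relation
`[(q)+(ι q)-2(o)] = 0`, injectivity of `AJ`, the Riemann–Roch uniqueness of
reduced representatives of nonzero degree-zero classes `[(r)-(q)]`, and
surjectivity of `X⁽²⁾ → J`. For every `p ∈ J` not in `J[2]`, the intersection
`Θ ∩ Θ_p ∩ Θ_{2p} ∩ Θ_{3p}` is empty, where `Θ_s = Θ + s`. -/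
theorem stmt_12 {X J : Type*} [AddCommGroup J]
    (ι : X → X) (o : X) (AJ : X → J) (Θ : Set J)
    (hinv : ∀ q, ι (ι q) = q) (hιo : ι o = o)
    (hAJo : AJ o = 0) (hAJι : ∀ q, AJ q + AJ (ι q) = 0)
    (hinj : Function.Injective AJ)
    (hrr : ∀ r q r' q' : X, AJ r - AJ q = AJ r' - AJ q' → AJ r ≠ AJ q →
      (r = r' ∧ q = q') ∨ (r = ι q' ∧ q = ι r'))
    (hsurj : ∀ s : J, ∃ a b : X, s = AJ a + AJ b)
    (hΘ : Θ = Set.range AJ)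
    (p : J) (hp2 : 2 • p ≠ 0) :
    Θ ∩ ((fun x => x + p) '' Θ) ∩ ((fun x => x + 2 • p) '' Θ) ∩
      ((fun x => x + 3 • p) '' Θ) = ∅ := by
  subst hΘ
  ext x
  simp only [Set.mem_inter_iff, Set.mem_image, Set.mem_empty_iff_false, iff_false,
    Set.mem_range]
  rintro ⟨⟨⟨⟨a, rfl⟩, _, ⟨b, rfl⟩, hb⟩, _, ⟨c, rfl⟩, hc⟩, _, ⟨d, rfl⟩, hd⟩
  have hp0 : p ≠ 0 := by
    rintro rfl
    exact hp2 (smul_zero 2)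
  have hab : AJ a - AJ b = p := by rw [← hb]; abel
  have hbc : AJ b - AJ c = p := by
    have h : AJ b + p = AJ c + 2 • p := by rw [hb, hc]
    calc AJ b - AJ c = (AJ b + p) - (AJ c + p) := by abel
      _ = (AJ c + 2 • p) - (AJ c + p) := by rw [h]
      _ = p := by rw [two_smul]; abel
  have hcd : AJ c - AJ d = p := by
    have h : AJ c + 2 • p = AJ d + 3 • p := by rw [hc, hd]
    calc AJ c - AJ d = (AJ c + 2 • p) - (AJ d + 2 • p) := by abel
      _ = (AJ d + 3 • p) - (AJ d + 2 • p) := by rw [h]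
      _ = p := by
          have : (3 : ℕ) • p = 2 • p + p := by rw [two_smul, succ_nsmul, two_smul]
          rw [this]; abel
  have hne_ab : AJ a ≠ AJ b := fun e => hp0 (by rw [← hab, e, sub_self])
  have hne_bc : AJ b ≠ AJ c := fun e => hp0 (by rw [← hbc, e, sub_self])
  have h2b : AJ b + AJ b = 0 := by
    rcases hrr a b b c (hab.trans hbc.symm) hne_ab with ⟨rfl, rfl⟩ | ⟨_, hbb⟩
    · exact absurd rfl hne_ab
    · have := hAJι b
      rwa [← hbb] at this
  have h2c : AJ c + AJ c = 0 := by
    rcases hrr b c c d (hbc.trans hcd.symm) hne_bc with ⟨rfl, rfl⟩ | ⟨_, hcc⟩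
    · exact absurd rfl hne_bc
    · have := hAJι c
      rwa [← hcc] at this
  apply hp2
  rw [two_smul, ← hbc]
  calc (AJ b - AJ c) + (AJ b - AJ c) = (AJ b + AJ b) - (AJ c + AJ c) := by abel
    _ = 0 := by rw [h2b, h2c, sub_self]
end
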